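/- No prefix of a Sturmian sequence can have two return words that both contain an even number of 1's. -/

import Mathlib

/-- Words over the binary alphabet `{0,1}`, represented as `ZMod 2`. -/
abbrev Word := List (ZMod 2)

/-- `m` is an occurrence of the word `w` in the sequence `s`. -/
def OccAt (s : ℕ → ZMod 2) (w : Word) (m : ℕ) : Prop :=
  w = List.ofFn fun i : Fin w.length => s (m + i)

/-- `w` is a factor of the sequence `s`. -/
def IsFactor (s : ℕ → ZMod 2) (w : Word) : Prop := ∃ m, OccAt s w m

/-- Factor complexity of a sequence. -/
noncomputable def Cplx (s : ℕ → ZMod 2) (n : ℕ) : ℕ :=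
  {w : Word | w.length = n ∧ IsFactor s w}.ncard

/-- A Sturmian sequence: factor complexity `n + 1` for all `n`. -/
def IsSturmian (s : ℕ → ZMod 2) : Prop := ∀ n, Cplx s n = n + 1

/-- The set of return words to the word `w` in the sequence `s`. -/
def ReturnWords (s : ℕ → ZMod 2) (w : Word) : Set Word :=
  {r | ∃ i j, OccAt s w i ∧ OccAt s w j ∧ i < j ∧
        (∀ t, i < t → t < j → ¬ OccAt s w t) ∧
        r = List.ofFn fun t : Fin (j - i) => s (i + t)}

/-! ### Basic window machinery -/

/-- The factor (window) of `z` of length `L` starting at position `m`. -/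
def FacAt (z : ℕ → ZMod 2) (L m : ℕ) : Word := List.ofFn fun i : Fin L => z (m + i)

@[simp] lemma FacAt_length (z : ℕ → ZMod 2) (L m : ℕ) : (FacAt z L m).length = L :=
  List.length_ofFn

lemma FacAt_getElem (z : ℕ → ZMod 2) (L m : ℕ) (j : ℕ) (hj : j < L) :
    (FacAt z L m)[j]'(by simpa using hj) = z (m + j) := by
  simp [FacAt]

lemma FacAt_ext_iff {z : ℕ → ZMod 2} {L m m' : ℕ} :
    FacAt z L m = FacAt z L m' ↔ ∀ j < L, z (m + j) = z (m' + j) := by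
  constructor
  · intro h j hj
    have := congrArg (fun l => l[j]?) h
    have h1 := FacAt_getElem z L m j hj
    have h2 := FacAt_getElem z L m' j hj
    rw [← h1, ← h2]
    simp [h]
  · intro h
    apply List.ext_getElem (by simp)
    intro j h1 h2
    simp only [FacAt_length] at h1
    rw [FacAt_getElem z L m j h1, FacAt_getElem z L m' j h1]
    exact h j h1

lemma occAt_iff_facAt {z : ℕ → ZMod 2} {w : Word} {L m : ℕ} (hw : w.length = L) :
    OccAt z w m ↔ w = FacAt z L m := by
  subst hw; rfl

lemma facAt_occAt (z : ℕ → ZMod 2) (L m : ℕ) : OccAt z (FacAt z L m) m := by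
  rw [occAt_iff_facAt (FacAt_length z L m)]

lemma isFactor_facAt (z : ℕ → ZMod 2) (L m : ℕ) : IsFactor z (FacAt z L m) :=
  ⟨m, facAt_occAt z L m⟩

lemma isFactor_iff {z : ℕ → ZMod 2} {w : Word} :
    IsFactor z w ↔ ∃ m, w = FacAt z w.length m := by
  unfold IsFactor OccAt FacAt; rfl

lemma isFactor_iff_len {z : ℕ → ZMod 2} {w : Word} {L : ℕ} (hw : w.length = L) :
    IsFactor z w ↔ ∃ m, w = FacAt z L m := by
  subst hw; exact isFactor_iff

lemma FacAt_add (z : ℕ → ZMod 2) (L1 L2 m : ℕ) :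
    FacAt z (L1 + L2) m = FacAt z L1 m ++ FacAt z L2 (m + L1) := by
  apply List.ext_getElem (by simp)
  intro j hj _
  simp only [FacAt_length] at hj
  rw [FacAt_getElem z _ m j hj]
  rcases Nat.lt_or_ge j L1 with h | h
  · rw [List.getElem_append_left (by simpa using h)]
    rw [FacAt_getElem z _ m j h]
  · rw [List.getElem_append_right (by simpa using h)]
    have : j - L1 < L2 := by omega
    simp only [FacAt_length]
    rw [FacAt_getElem z _ (m + L1) (j - L1) this]
    congr 1
    omega

lemma FacAt_succ (z : ℕ → ZMod 2) (L m : ℕ) :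
    FacAt z (L + 1) m = FacAt z L m ++ [z (m + L)] := by
  rw [FacAt_add]
  congr 1

lemma FacAt_take (z : ℕ → ZMod 2) (L m k : ℕ) (h : k ≤ L) :
    (FacAt z L m).take k = FacAt z k m := by
  obtain ⟨j, rfl⟩ := Nat.exists_eq_add_of_le h
  rw [FacAt_add, List.take_append_of_le_length (by simp), List.take_of_length_le (by simp)]

lemma FacAt_drop (z : ℕ → ZMod 2) (L m k : ℕ) (h : k ≤ L) :
    (FacAt z L m).drop k = FacAt z (L - k) (m + k) := by
  apply List.ext_getElem (by simp)
  intro j h1 h2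
  simp only [List.getElem_drop]
  rw [FacAt_getElem z (L-k) (m+k) j (by simpa using h2)]
  have hkj : k + j < L := by simp at h2; omega
  rw [FacAt_getElem z L m (k+j) hkj]
  congr 1
  omega

/-- prefixes of factors are factors -/
lemma isFactor_take {z : ℕ → ZMod 2} {w : Word} (h : IsFactor z w) (k : ℕ) :
    IsFactor z (w.take k) := by
  rcases Nat.lt_or_ge k w.length with hk | hk
  · obtain ⟨m, hw⟩ := isFactor_iff.1 h
    have : List.take k w = FacAt z k m := by
      rw [hw]; exact FacAt_take z (w.length) m k (le_of_lt hk)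
    rw [this]
    exact isFactor_facAt z k m
  · rw [List.take_of_length_le hk]; exact h

lemma isFactor_drop {z : ℕ → ZMod 2} {w : Word} (h : IsFactor z w) (k : ℕ) :
    IsFactor z (w.drop k) := by
  rcases Nat.lt_or_ge w.length k with hk | hk
  · rw [List.drop_of_length_le (le_of_lt hk)]; exact ⟨0, by simp [OccAt]⟩
  · obtain ⟨m, hw⟩ := isFactor_iff.1 h
    have : List.drop k w = FacAt z (w.length - k) (m + k) := by
      conv_lhs => rw [hw]
      rw [FacAt_drop z (w.length) m k hk]
    rw [this]
    exact isFactor_facAt _ _ _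

lemma zmod2_cases (x : ZMod 2) : x = 0 ∨ x = 1 := by revert x; decide

lemma zmod2_ne_iff (x y : ZMod 2) : x ≠ y ↔ y = x + 1 := by revert x y; decide


/-! ### Complexity counting -/

def FacSet (z : ℕ → ZMod 2) (L : ℕ) : Set Word := {w | w.length = L ∧ IsFactor z w}

lemma cplx_eq (z : ℕ → ZMod 2) (L : ℕ) : Cplx z L = (FacSet z L).ncard := rfl

lemma facSet_finite (z : ℕ → ZMod 2) (L : ℕ) : (FacSet z L).Finite := by
  apply Set.Finite.subset (Set.finite_range (fun f : Fin L → ZMod 2 => List.ofFn f))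
  rintro w ⟨hl, hf⟩
  obtain ⟨m, rfl⟩ := (isFactor_iff_len hl).1 hf
  exact ⟨_, rfl⟩

/-- The set of right special factors of length `L`. -/
def RSet (z : ℕ → ZMod 2) (L : ℕ) : Set Word :=
  {w | w.length = L ∧ IsFactor z (w ++ [0]) ∧ IsFactor z (w ++ [1])}

lemma rset_subset (z : ℕ → ZMod 2) (L : ℕ) : RSet z L ⊆ FacSet z L := by
  rintro w ⟨hl, h0, _⟩
  refine ⟨hl, ?_⟩
  have := isFactor_take h0 L
  rwa [List.take_append_of_le_length (le_of_eq hl.symm), List.take_of_length_le (le_of_eq hl)] at this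

lemma rset_finite (z : ℕ → ZMod 2) (L : ℕ) : (RSet z L).Finite :=
  (facSet_finite z L).subset (rset_subset z L)

lemma mem_rset_of_two_ext {z : ℕ → ZMod 2} {w : Word} {L : ℕ} {c c' : ZMod 2}
    (hl : w.length = L) (hc : IsFactor z (w ++ [c])) (hc' : IsFactor z (w ++ [c']))
    (hne : c ≠ c') : w ∈ RSet z L := by
  rcases zmod2_cases c with rfl | rfl <;> rcases zmod2_cases c' with rfl | rfl
  · exact absurd rfl hne
  · exact ⟨hl, hc, hc'⟩
  · exact ⟨hl, hc', hc⟩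
  · exact absurd rfl hne

/-- the key counting identity. -/
lemma cplx_succ (z : ℕ → ZMod 2) (L : ℕ) :
    Cplx z (L + 1) = Cplx z L + (RSet z L).ncard := by
  classical
  set S0 : Set Word := {w ∈ FacSet z L | IsFactor z (w ++ [0])} with hS0
  set S1 : Set Word := {w ∈ FacSet z L | IsFactor z (w ++ [1])} with hS1
  have hS0f : S0.Finite := (facSet_finite z L).subset (Set.sep_subset _ _)
  have hS1f : S1.Finite := (facSet_finite z L).subset (Set.sep_subset _ _)
  -- FacSet (L+1) is the disjoint union of the two images
  have himg : FacSet z (L+1) = (fun w => w ++ [(0 : ZMod 2)]) '' S0 ∪ (fun w => w ++ [(1 : ZMod 2)]) '' S1 := by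
    ext w
    constructor
    · rintro ⟨hl, hf⟩
      obtain ⟨m, rfl⟩ := (isFactor_iff_len hl).1 hf
      rw [FacAt_succ]
      have hmem : FacAt z L m ∈ FacSet z L := ⟨by simp, isFactor_facAt z L m⟩
      have hfac : IsFactor z (FacAt z L m ++ [z (m + L)]) := by
        rw [← FacAt_succ]; exact isFactor_facAt _ _ _
      rcases zmod2_cases (z (m + L)) with h | h <;> rw [h] at hfac ⊢
      · exact Or.inl ⟨_, ⟨hmem, hfac⟩, rfl⟩
      · exact Or.inr ⟨_, ⟨hmem, hfac⟩, rfl⟩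
    · rintro (⟨v, ⟨⟨hl, _⟩, hf⟩, rfl⟩ | ⟨v, ⟨⟨hl, _⟩, hf⟩, rfl⟩) <;>
        exact ⟨by simp [hl], hf⟩
  have hinj0 : Function.Injective (fun w : Word => w ++ [(0:ZMod 2)]) := by
    intro x y h; simpa using h
  have hinj1 : Function.Injective (fun w : Word => w ++ [(1:ZMod 2)]) := by
    intro x y h; simpa using h
  have hdisj : Disjoint ((fun w => w ++ [(0 : ZMod 2)]) '' S0) ((fun w => w ++ [(1 : ZMod 2)]) '' S1) := by
    rw [Set.disjoint_left]
    rintro w ⟨v, _, rfl⟩ ⟨v', _, h⟩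
    have := congrArg (fun l => l.getLast?) h
    simp at this
  have hcup : S0 ∪ S1 = FacSet z L := by
    apply Set.Subset.antisymm
    · rintro w (⟨h, _⟩ | ⟨h, _⟩) <;> exact h
    · rintro w ⟨hl, hf⟩
      obtain ⟨m, rfl⟩ := (isFactor_iff_len hl).1 hf
      have hfac : IsFactor z (FacAt z L m ++ [z (m + L)]) := by
        rw [← FacAt_succ]; exact isFactor_facAt _ _ _
      rcases zmod2_cases (z (m + L)) with h | h <;> rw [h] at hfac
      · exact Or.inl ⟨⟨by simp, isFactor_facAt _ _ _⟩, hfac⟩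
      · exact Or.inr ⟨⟨by simp, isFactor_facAt _ _ _⟩, hfac⟩
  have hcap : S0 ∩ S1 = RSet z L := by
    ext w
    constructor
    · rintro ⟨⟨⟨hl, _⟩, h0⟩, ⟨_, h1⟩⟩
      exact ⟨hl, h0, h1⟩
    · rintro ⟨hl, h0, h1⟩
      have hw : w ∈ FacSet z L := rset_subset z L ⟨hl, h0, h1⟩
      exact ⟨⟨hw, h0⟩, ⟨hw, h1⟩⟩
  rw [cplx_eq, cplx_eq, himg,
    Set.ncard_union_eq hdisj (hS0f.image _) (hS1f.image _),
    Set.ncard_image_of_injective _ hinj0, Set.ncard_image_of_injective _ hinj1]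
  have := Set.ncard_union_add_ncard_inter S0 S1 hS0f hS1f
  rw [hcup, hcap] at this
  omega

lemma cplx_zero (z : ℕ → ZMod 2) : Cplx z 0 = 1 := by
  rw [cplx_eq]
  have : FacSet z 0 = {([] : Word)} := by
    ext w
    simp only [FacSet, Set.mem_setOf_eq, Set.mem_singleton_iff, List.length_eq_zero_iff]
    constructor
    · rintro ⟨h, _⟩; exact h
    · rintro rfl; exact ⟨rfl, 0, by simp [OccAt]⟩
  rw [this, Set.ncard_singleton]

lemma cplx_mono_succ (z : ℕ → ZMod 2) (L : ℕ) : Cplx z L ≤ Cplx z (L + 1) := by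
  rw [cplx_succ]; omega


/-! ### Morse–Hedlund machinery -/

def EvPer (z : ℕ → ZMod 2) : Prop := ∃ p ≥ 1, ∃ M, ∀ m ≥ M, z (m + p) = z m

lemma cplx_le_of_evPer {z : ℕ → ZMod 2} (h : EvPer z) : ∃ B, ∀ L, Cplx z L ≤ B := by
  obtain ⟨p, hp, M, hper⟩ := h
  refine ⟨M + p, fun L => ?_⟩
  have key : ∀ m, ∃ m' < M + p, FacAt z L m' = FacAt z L m := by
    intro m
    induction m using Nat.strong_induction_on with
    | _ m ih =>
      rcases Nat.lt_or_ge m (M + p) with hm | hm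
      · exact ⟨m, hm, rfl⟩
      · obtain ⟨m', hm', heq⟩ := ih (m - p) (by omega)
        refine ⟨m', hm', heq.trans ?_⟩
        rw [FacAt_ext_iff]
        intro j _
        have : m - p + j + p = m + j := by omega
        rw [← this, hper (m - p + j) (by omega)]
  have hsub : FacSet z L ⊆ (fun m => FacAt z L m) '' (Set.Iio (M + p)) := by
    rintro w ⟨hl, hf⟩
    obtain ⟨m, rfl⟩ := (isFactor_iff_len hl).1 hf
    obtain ⟨m', hm', heq⟩ := key m
    exact ⟨m', hm', heq⟩
  calc Cplx z L = (FacSet z L).ncard := rfl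
    _ ≤ ((fun m => FacAt z L m) '' (Set.Iio (M + p))).ncard :=
        Set.ncard_le_ncard hsub (((Set.finite_Iio _).image _))
    _ ≤ (Set.Iio (M + p)).ncard := Set.ncard_image_le (Set.finite_Iio _)
    _ = M + p := by
        rw [show Set.Iio (M + p) = ↑(Finset.range (M + p)) by ext; simp,
          Set.ncard_coe_finset, Finset.card_range]

lemma sturmian_not_evPer {z : ℕ → ZMod 2} (hz : IsSturmian z) : ¬ EvPer z := by
  intro h
  obtain ⟨B, hB⟩ := cplx_le_of_evPer h
  have := hB B
  rw [hz B] at this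
  omega

lemma evPer_of_plateau {z : ℕ → ZMod 2} {L : ℕ} (h : Cplx z (L + 1) = Cplx z L) : EvPer z := by
  have hcard : (RSet z L).ncard = 0 := by
    have := cplx_succ z L
    omega
  have hempty : RSet z L = ∅ := by
    rcases Set.eq_empty_or_nonempty (RSet z L) with h' | h'
    · exact h'
    · exfalso
      have := Set.ncard_ne_zero_of_mem h'.choose_spec (rset_finite z L)
      omega
  -- determinism
  have det : ∀ m m', FacAt z L m = FacAt z L m' → z (m + L) = z (m' + L) := by
    intro m m' heq
    by_contra hne
    have h1 : IsFactor z (FacAt z L m ++ [z (m + L)]) := by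
      rw [← FacAt_succ]; exact isFactor_facAt _ _ _
    have h2 : IsFactor z (FacAt z L m ++ [z (m' + L)]) := by
      rw [heq, ← FacAt_succ]; exact isFactor_facAt _ _ _
    have : FacAt z L m ∈ RSet z L := mem_rset_of_two_ext (by simp) h1 h2 hne
    rw [hempty] at this
    exact this
  -- pigeonhole
  have : ∃ t1 t2 : ℕ, t1 ≠ t2 ∧ FacAt z L t1 = FacAt z L t2 := by
    have : Finite ↥(FacSet z L) := (facSet_finite z L).to_subtype
    obtain ⟨t1, t2, hne, heq⟩ := Finite.exists_ne_map_eq_of_infinite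
      (fun m : ℕ => (⟨FacAt z L m, by simp, isFactor_facAt z L m⟩ : ↥(FacSet z L)))
    exact ⟨t1, t2, hne, congrArg Subtype.val heq⟩
  obtain ⟨t1, t2, hne, heq⟩ := this
  -- wlog t1 < t2
  rcases Nat.lt_or_ge t1 t2 with hlt | hge
  case _ =>
    refine ⟨t2 - t1, by omega, t1 + L, ?_⟩
    -- all windows propagate
    have windows : ∀ s, FacAt z L (t1 + s) = FacAt z L (t2 + s) := by
      intro s
      induction s with
      | zero => simpa using heq
      | succ s ih =>
        rw [FacAt_ext_iff]
        intro j hj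
        rcases Nat.lt_or_ge (j + 1) L with hj1 | hj1
        · have := (FacAt_ext_iff.1 ih) (j+1) hj1
          have e1 : t1 + (s+1) + j = t1 + s + (j+1) := by omega
          have e2 : t2 + (s+1) + j = t2 + s + (j+1) := by omega
          rw [e1, e2]; exact this
        · have hjL : j = L - 1 ∧ 1 ≤ L ∨ (L = 0) := by omega
          have := det (t1 + s) (t2 + s) ih
          rcases hjL with ⟨hj2, hL⟩ | rfl
          · have e1 : t1 + (s+1) + j = t1 + s + L := by omega
            have e2 : t2 + (s+1) + j = t2 + s + L := by omega
            rw [e1, e2]; exact this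
          · omega
    intro m hm
    have hs := det (t1 + (m - (t1 + L))) (t2 + (m - (t1 + L))) (windows _)
    have e1 : t1 + (m - (t1 + L)) + L = m := by omega
    have e2 : t2 + (m - (t1 + L)) + L = m + (t2 - t1) := by omega
    rw [e1, e2] at hs
    exact hs.symm
  case _ =>
    have hlt : t2 < t1 := by omega
    refine ⟨t1 - t2, by omega, t2 + L, ?_⟩
    have windows : ∀ s, FacAt z L (t2 + s) = FacAt z L (t1 + s) := by
      intro s
      induction s with
      | zero => simpa using heq.symm
      | succ s ih =>
        rw [FacAt_ext_iff]
        intro j hj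
        rcases Nat.lt_or_ge (j + 1) L with hj1 | hj1
        · have := (FacAt_ext_iff.1 ih) (j+1) hj1
          have e1 : t2 + (s+1) + j = t2 + s + (j+1) := by omega
          have e2 : t1 + (s+1) + j = t1 + s + (j+1) := by omega
          rw [e1, e2]; exact this
        · have hjL : j = L - 1 ∧ 1 ≤ L ∨ (L = 0) := by omega
          have := det (t2 + s) (t1 + s) ih
          rcases hjL with ⟨hj2, hL⟩ | rfl
          · have e1 : t2 + (s+1) + j = t2 + s + L := by omega
            have e2 : t1 + (s+1) + j = t1 + s + L := by omega
            rw [e1, e2]; exact this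
          · omega
    intro m hm
    have hs := det (t2 + (m - (t2 + L))) (t1 + (m - (t2 + L))) (windows _)
    have e1 : t2 + (m - (t2 + L)) + L = m := by omega
    have e2 : t1 + (m - (t2 + L)) + L = m + (t1 - t2) := by omega
    rw [e1, e2] at hs
    exact hs.symm

lemma cplx_ge_of_not_evPer {z : ℕ → ZMod 2} (h : ¬ EvPer z) : ∀ L, L + 1 ≤ Cplx z L := by
  intro L
  induction L with
  | zero => rw [cplx_zero]
  | succ L ih =>
    have hne : Cplx z (L + 1) ≠ Cplx z L := fun hc => h (evPer_of_plateau hc)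
    have := cplx_mono_succ z L
    omega


/-! ### Unique right special factors in Sturmian sequences -/

lemma rset_unique {z : ℕ → ZMod 2} (hz : IsSturmian z) (L : ℕ) :
    ∀ w1 ∈ RSet z L, ∀ w2 ∈ RSet z L, w1 = w2 := by
  have hcard : (RSet z L).ncard = 1 := by
    have := cplx_succ z L
    rw [hz L, hz (L+1)] at this
    omega
  obtain ⟨A, hA⟩ := Set.ncard_eq_one.1 hcard
  rw [hA]
  rintro w1 rfl w2 rfl
  rfl

lemma rset_drop {z : ℕ → ZMod 2} {w : Word} {L : ℕ} (hw : w ∈ RSet z L) (k : ℕ) (hk : k ≤ L) :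
    w.drop (L - k) ∈ RSet z k := by
  obtain ⟨hl, h0, h1⟩ := hw
  have hd : ∀ c : ZMod 2, (w.drop (L - k)) ++ [c] = (w ++ [c]).drop (L - k) := by
    intro c
    rw [List.drop_append_of_le_length (by omega)]
  refine ⟨by simp [hl]; omega, ?_, ?_⟩
  · rw [hd]; exact isFactor_drop h0 _
  · rw [hd]; exact isFactor_drop h1 _

/-- the right special factor of length `k` is a suffix of any longer one. -/
lemma rset_suffix {z : ℕ → ZMod 2} (hz : IsSturmian z) {w1 w2 : Word} {L1 L2 : ℕ}
    (h1 : w1 ∈ RSet z L1) (h2 : w2 ∈ RSet z L2) (hL : L1 ≤ L2) :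
    w1 = w2.drop (L2 - L1) :=
  rset_unique hz L1 w1 h1 _ (rset_drop h2 L1 hL)


/-! ### Block structure over the first letter -/

lemma zmod2_eq_or (x y : ZMod 2) : x = y ∨ x = y + 1 := by revert x y; decide

lemma zmod2_self_ne_add_one (x : ZMod 2) : x ≠ x + 1 := by revert x; decide

structure BSys (u : ℕ → ZMod 2) (i : ℕ → ℕ) (P' : ℕ) (d : ℕ → ZMod 2) : Prop where
  izero : i 0 = 0
  head : ∀ t, u (i t) = u 0
  mid : ∀ t m, i t < m → m < i (t+1) → u m = u 0 + 1
  complete : ∀ m, u m = u 0 → ∃ t, m = i t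
  gap : ∀ t, i (t+1) = i t + ((P' + 1) + (d t).val)

namespace BSys

variable {u : ℕ → ZMod 2} {i : ℕ → ℕ} {P' : ℕ} {d : ℕ → ZMod 2}

lemma mono (hB : BSys u i P' d) : StrictMono i := by
  apply strictMono_nat_of_lt_succ
  intro t
  have := hB.gap t
  omega

lemma gap_pos (hB : BSys u i P' d) (t : ℕ) : i t + 1 ≤ i (t + 1) := hB.mono (by omega)

/-- the letter at an interior offset of a block -/
lemma interior (hB : BSys u i P' d) (t j : ℕ) (h1 : 1 ≤ j) (h2 : j < P' + 1 + (d t).val) :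
    u (i t + j) = u 0 + 1 := by
  apply hB.mid t
  · omega
  · rw [hB.gap t]; omega

end BSys

lemma blockSys_exists {u : ℕ → ZMod 2} (hu : IsSturmian u) :
    ∃ i P' d, BSys u i P' d ∧ (∃ t, d t = 0) ∧ (∃ t, d t = 1) := by
  classical
  -- infinitude of the first letter
  have inf : ∀ M, ∃ m, M ≤ m ∧ u m = u 0 := by
    intro M
    by_contra hc
    push_neg at hc
    apply sturmian_not_evPer hu
    refine ⟨1, le_refl 1, M, fun m hm => ?_⟩
    have h1 : u m = u 0 + 1 := by
      rcases zmod2_eq_or (u m) (u 0) with h | h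
      · exact absurd h (hc m hm)
      · exact h
    have h2 : u (m + 1) = u 0 + 1 := by
      rcases zmod2_eq_or (u (m+1)) (u 0) with h | h
      · exact absurd h (hc (m+1) (by omega))
      · exact h
    rw [h1, h2]
  -- the enumeration of occurrences of the first letter
  let i : ℕ → ℕ := fun t => Nat.rec 0 (fun _ p => Nat.find (inf (p + 1))) t
  have hi0 : i 0 = 0 := rfl
  have hisucc : ∀ t, i (t + 1) = Nat.find (inf (i t + 1)) := fun t => rfl
  have hhead : ∀ t, u (i t) = u 0 := by
    intro t
    cases t with
    | zero => rfl
    | succ t => exact (Nat.find_spec (inf (i t + 1))).2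
  have hlt : ∀ t, i t < i (t + 1) := by
    intro t
    have := (Nat.find_spec (inf (i t + 1))).1
    rw [hisucc]; omega
  have hmid : ∀ t m, i t < m → m < i (t+1) → u m = u 0 + 1 := by
    intro t m h1 h2
    rcases zmod2_eq_or (u m) (u 0) with h | h
    · exfalso
      rw [hisucc] at h2
      exact Nat.find_min (inf (i t + 1)) h2 ⟨by omega, h⟩
    · exact h
  have hcomplete : ∀ m, u m = u 0 → ∃ t, m = i t := by
    intro m hm
    have loc : ∀ m, ∃ t, i t ≤ m ∧ m < i (t + 1) := by
      intro m
      induction m with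
      | zero => exact ⟨0, by omega, by have := hlt 0; omega⟩
      | succ m ih =>
        obtain ⟨t, h1, h2⟩ := ih
        rcases Nat.lt_or_ge (m + 1) (i (t+1)) with h | h
        · exact ⟨t, by omega, h⟩
        · have : m + 1 = i (t + 1) := by omega
          exact ⟨t + 1, by omega, by rw [this]; exact hlt (t+1)⟩
    obtain ⟨t, h1, h2⟩ := loc m
    rcases Nat.eq_or_lt_of_le h1 with h | h
    · exact ⟨t, h.symm⟩
    · exfalso
      have hm2 := hmid t m h h2
      rw [hm2] at hm
      exact zmod2_self_ne_add_one (u 0) hm.symm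
  -- gaps
  set gap : ℕ → ℕ := fun t => i (t + 1) - i t with hgap
  have gap_ge : ∀ t, 1 ≤ gap t := fun t => by have := hlt t; simp [hgap]; omega
  -- any two gaps differ by at most 1
  have gap_two : ∀ t t', gap t ≤ gap t' + 1 := by
    intro t t'
    by_contra hc
    push_neg at hc
    set g1 := gap t' with hg1
    set g2 := gap t with hg2
    have hg2' : g1 + 2 ≤ g2 := hc
    have hg1pos : 1 ≤ g1 := gap_ge t'
    have hit' : i t' + g1 = i (t' + 1) := by have := hlt t'; simp [hg1, hgap]; omega
    have hit : i t + g2 = i (t + 1) := by have := hlt t; simp [hg2, hgap]; omega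
    have midt' : ∀ j, 1 ≤ j → j < g1 → u (i t' + j) = u 0 + 1 := by
      intro j hj1 hj2
      exact hmid t' _ (by omega) (by omega)
    have midt : ∀ j, 1 ≤ j → j < g2 → u (i t + j) = u 0 + 1 := by
      intro j hj1 hj2
      exact hmid t _ (by omega) (by omega)
    -- first right special word : the block-prefix of length g1
    have hw1w : FacAt u g1 (i t') = FacAt u g1 (i t) := by
      rw [FacAt_ext_iff]
      intro j hj
      rcases Nat.eq_zero_or_pos j with rfl | hj0
      · simp only [Nat.add_zero]
        exact (hhead t').trans (hhead t).symm
      · rw [midt' j hj0 hj, midt j hj0 (by omega)]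
    have hrs1 : FacAt u g1 (i t') ∈ RSet u g1 := by
      apply mem_rset_of_two_ext (by simp)
        (c := u 0) (c' := u 0 + 1) _ _ (zmod2_self_ne_add_one (u 0))
      · have : FacAt u g1 (i t') ++ [u 0] = FacAt u (g1 + 1) (i t') := by
          rw [FacAt_succ]
          congr 2
          rw [hit']
          exact (hhead (t' + 1)).symm
        rw [this]; exact isFactor_facAt _ _ _
      · have : FacAt u g1 (i t') ++ [u 0 + 1] = FacAt u (g1 + 1) (i t) := by
          rw [FacAt_succ, hw1w]
          congr 2
          rw [midt g1 (by omega) (by omega)]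
        rw [this]; exact isFactor_facAt _ _ _
    -- second right special word : all-b word inside the big block
    have hw2w : FacAt u g1 (i t + (g2 - g1)) = FacAt u g1 (i t + 1) := by
      rw [FacAt_ext_iff]
      intro j hj
      have e1 : i t + (g2 - g1) + j = i t + ((g2 - g1) + j) := by omega
      have e2 : i t + 1 + j = i t + (1 + j) := by omega
      rw [e1, e2, midt _ (by omega) (by omega), midt _ (by omega) (by omega)]
    have hrs2 : FacAt u g1 (i t + (g2 - g1)) ∈ RSet u g1 := by
      apply mem_rset_of_two_ext (by simp)
        (c := u 0) (c' := u 0 + 1) _ _ (zmod2_self_ne_add_one (u 0))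
      · have : FacAt u g1 (i t + (g2 - g1)) ++ [u 0] = FacAt u (g1 + 1) (i t + (g2 - g1)) := by
          rw [FacAt_succ]
          congr 2
          have e : i t + (g2 - g1) + g1 = i t + g2 := by omega
          rw [e, hit]
          exact (hhead (t + 1)).symm
        rw [this]; exact isFactor_facAt _ _ _
      · have : FacAt u g1 (i t + (g2 - g1)) ++ [u 0 + 1] = FacAt u (g1 + 1) (i t + 1) := by
          rw [FacAt_succ, hw2w]
          congr 2
          have e : i t + 1 + g1 = i t + (1 + g1) := by omega
          rw [e, midt _ (by omega) (by omega)]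
        rw [this]; exact isFactor_facAt _ _ _
    -- but they are distinct : contradiction
    have := rset_unique hu g1 _ hrs1 _ hrs2
    have h0 := congrArg (fun l => l[0]?) this
    rw [List.getElem?_eq_getElem (by simp; omega), List.getElem?_eq_getElem (by simp; omega)] at h0
    simp only [Option.some_inj] at h0
    rw [FacAt_getElem u g1 (i t') 0 (by omega), FacAt_getElem u g1 (i t + (g2 - g1)) 0 (by omega)] at h0
    rw [Nat.add_zero, Nat.add_zero, hhead t', midt _ (by omega) (by omega)] at h0
    exact zmod2_self_ne_add_one (u 0) h0
  -- not all gaps equal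
  have gap_ne : ∃ t1 t2, gap t1 ≠ gap t2 := by
    by_contra hc
    push_neg at hc
    set g := gap 0 with hg
    have hgall : ∀ t, i (t + 1) = i t + g := by
      intro t
      have h1 := hc t 0
      have h2 := hlt t
      have h3 := hlt 0
      have e : gap t = i (t + 1) - i t := rfl
      have e0 : gap 0 = i 1 - i 0 := rfl
      omega
    have hmul : ∀ t, i t = t * g := by
      intro t
      induction t with
      | zero => rw [hi0]; omega
      | succ t ih => rw [hgall t, ih]; ring
    apply sturmian_not_evPer hu
    refine ⟨g, gap_ge 0, 0, fun m _ => ?_⟩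
    rcases zmod2_eq_or (u m) (u 0) with h | h
    · obtain ⟨t, rfl⟩ := hcomplete m h
      have e : i t + g = i (t + 1) := (hgall t).symm
      rw [e]
      exact (hhead (t + 1)).trans (hhead t).symm
    · rw [h]
      rcases zmod2_eq_or (u (m + g)) (u 0) with h2 | h2
      · exfalso
        obtain ⟨t, ht⟩ := hcomplete (m + g) h2
        have hgpos := gap_ge 0
        have ht1 : 1 ≤ t := by
          by_contra h3
          push_neg at h3
          interval_cases t
          rw [hi0] at ht
          omega
        obtain ⟨t', rfl⟩ : ∃ t', t = t' + 1 := ⟨t - 1, by omega⟩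
        have e1 := hmul (t' + 1)
        have e2 := hmul t'
        have e3 : (t' + 1) * g = t' * g + g := by ring
        have hm2 : m = i t' := by omega
        rw [hm2] at h
        rw [hhead t'] at h
        exact zmod2_self_ne_add_one (u 0) h
      · rw [h2]
  -- extract P
  have hPex : ∃ P, (∀ t, P ≤ gap t ∧ gap t ≤ P + 1) ∧ (∃ t, gap t = P) ∧ ∃ t, gap t = P + 1 := by
    obtain ⟨t1, t2, hne⟩ := gap_ne
    rcases Nat.lt_or_ge (gap t1) (gap t2) with h | h
    · refine ⟨gap t1, fun t => ⟨?_, ?_⟩, ⟨t1, rfl⟩, ⟨t2, ?_⟩⟩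
      · by_contra h3; push_neg at h3
        have := gap_two t1 t
        have := gap_two t2 t
        omega
      · exact gap_two t t1
      · have := gap_two t2 t1; omega
    · have h' : gap t2 < gap t1 := by omega
      refine ⟨gap t2, fun t => ⟨?_, ?_⟩, ⟨t2, rfl⟩, ⟨t1, ?_⟩⟩
      · by_contra h3; push_neg at h3
        have := gap_two t2 t
        have := gap_two t1 t
        omega
      · exact gap_two t t2
      · have := gap_two t1 t2; omega
  obtain ⟨P, hPb, ⟨tx, htx⟩, ⟨ty, hty⟩⟩ := hPex
  have hP1 : 1 ≤ P := by have := (hPb tx).1; have := gap_ge tx; omega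
  refine ⟨i, P - 1, fun t => if gap t = P then 0 else 1, ⟨hi0, hhead, ?_, hcomplete, ?_⟩, ⟨tx, by simp [htx]⟩, ⟨ty, by simp [hty]⟩⟩
  · intro t m h1 h2
    exact hmid t m h1 h2
  · intro t
    have hb := hPb t
    have := hlt t
    by_cases h : gap t = P
    · simp [h]
      simp [hgap] at h
      omega
    · simp [h]
      have : gap t = P + 1 := by omega
      simp [hgap] at this
      have hv : ((1 : ZMod 2)).val = 1 := rfl
      omega


/-! ### Concatenation of blocks -/

def blockW (a : ZMod 2) (P' : ℕ) (c : ZMod 2) : Word := a :: List.replicate (P' + c.val) (a + 1)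

def concatW (a : ZMod 2) (P' : ℕ) (ρ : Word) : Word := (ρ.map (blockW a P')).flatten

@[simp] lemma blockW_length (a : ZMod 2) (P' : ℕ) (c : ZMod 2) :
    (blockW a P' c).length = P' + 1 + c.val := by
  simp [blockW]; omega

@[simp] lemma concatW_nil (a : ZMod 2) (P' : ℕ) : concatW a P' [] = [] := rfl

lemma concatW_cons (a : ZMod 2) (P' : ℕ) (c : ZMod 2) (ρ : Word) :
    concatW a P' (c :: ρ) = blockW a P' c ++ concatW a P' ρ := by
  simp [concatW]

lemma concatW_append (a : ZMod 2) (P' : ℕ) (ρ σ : Word) :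
    concatW a P' (ρ ++ σ) = concatW a P' ρ ++ concatW a P' σ := by
  simp [concatW]

def sumVal (ρ : Word) : ℕ := (ρ.map ZMod.val).sum

@[simp] lemma sumVal_nil : sumVal [] = 0 := rfl

lemma sumVal_cons (c : ZMod 2) (ρ : Word) : sumVal (c :: ρ) = c.val + sumVal ρ := by
  simp [sumVal]

lemma sumVal_eq_count (ρ : Word) : sumVal ρ = ρ.count 1 := by
  induction ρ with
  | nil => rfl
  | cons c ρ ih =>
    rw [sumVal_cons, ih, List.count_cons]
    rcases zmod2_cases c with rfl | rfl
    · simp [show ((0:ZMod 2)).val = 0 from rfl]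
    · simp [show ((1:ZMod 2)).val = 1 from rfl]
      omega

lemma concatW_length (a : ZMod 2) (P' : ℕ) (ρ : Word) :
    (concatW a P' ρ).length = (P' + 1) * ρ.length + sumVal ρ := by
  induction ρ with
  | nil => simp
  | cons c ρ ih =>
    rw [concatW_cons, List.length_append, ih, sumVal_cons]
    simp [blockW]
    ring

lemma count_blockW_self (a : ZMod 2) (P' : ℕ) (c : ZMod 2) :
    (blockW a P' c).count a = 1 := by
  rw [blockW, List.count_cons, List.count_replicate]
  simp [zmod2_self_ne_add_one a]

lemma count_concatW_self (a : ZMod 2) (P' : ℕ) (ρ : Word) :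
    (concatW a P' ρ).count a = ρ.length := by
  induction ρ with
  | nil => simp
  | cons c ρ ih =>
    rw [concatW_cons, List.count_append, ih, count_blockW_self]
    simp only [List.length_cons]
    omega

lemma concatW_cons' (a : ZMod 2) (P' : ℕ) (c : ZMod 2) (ρ : Word) :
    concatW a P' (c :: ρ) = a :: (List.replicate (P' + c.val) (a + 1) ++ concatW a P' ρ) := by
  simp [concatW_cons, blockW]

lemma concatW_head? (a : ZMod 2) (P' : ℕ) (c : ZMod 2) (ρ : Word) :
    (concatW a P' (c :: ρ))[0]? = some a := by
  rw [concatW_cons']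
  simp

lemma concatW_inj (a : ZMod 2) (P' : ℕ) : ∀ ρ σ : Word,
    concatW a P' ρ = concatW a P' σ → ρ = σ := by
  have hlen : ∀ ρ σ : Word, concatW a P' ρ = concatW a P' σ → ρ.length = σ.length := by
    intro ρ σ h
    rw [← count_concatW_self a P' ρ, ← count_concatW_self a P' σ, h]
  intro ρ
  induction ρ with
  | nil =>
    intro σ h
    have := hlen [] σ h
    simp at this
    exact (List.length_eq_zero_iff.1 this.symm).symm
  | cons c ρ ih =>
    intro σ h
    have hl := hlen _ _ h
    match σ with
    | [] => simp at hl
    | c' :: σ =>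
      simp only [List.length_cons, Nat.add_right_cancel_iff] at hl
      by_cases hc : c = c'
      · subst hc
        rw [concatW_cons, concatW_cons] at h
        have := List.append_cancel_left h
        rw [ih σ this]
      · exfalso
        have key : ∀ ρ σ : Word, ρ.length = σ.length →
            concatW a P' (0 :: ρ) = concatW a P' (1 :: σ) → False := by
          intro ρ σ hls heq
          match ρ, σ, hls with
          | [], [], _ =>
            have := congrArg List.length heq
            simp [blockW, concatW, ZMod.val] at this
            exact absurd this (by decide)
          | (e :: ρ), (e' :: σ), hls =>
            have hget := congrArg (fun l => l[P' + 1]?) heq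
            have hlen0 : (blockW a P' 0).length = P' + 1 := by
              simp [show ((0:ZMod 2)).val = 0 from rfl]
            have hlen1 : (blockW a P' 1).length = P' + 2 := by
              simp [show ((1:ZMod 2)).val = 1 from rfl]
            rw [concatW_cons a P' 0, List.getElem?_append_right (by omega)] at hget
            rw [concatW_cons a P' 1, List.getElem?_append_left (by omega)] at hget
            rw [hlen0] at hget
            simp only [Nat.sub_self] at hget
            rw [concatW_head? a P' e ρ] at hget
            rw [show blockW a P' 1 = a :: List.replicate (P' + 1) (a + 1) from by
              simp [blockW, show ((1:ZMod 2)).val = 1 from rfl]] at hget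
            rw [List.getElem?_cons_succ] at hget
            rw [List.getElem?_replicate] at hget
            simp only [if_pos (by omega : P' < P' + 1), Option.some_inj] at hget
            exact zmod2_self_ne_add_one a hget
        rcases zmod2_cases c with rfl | rfl <;> rcases zmod2_cases c' with rfl | rfl
        · exact hc rfl
        · exact key ρ σ hl h
        · exact key σ ρ hl.symm h.symm
        · exact hc rfl


/-! ### Windows of blocks -/

namespace BSys

variable {u : ℕ → ZMod 2} {i : ℕ → ℕ} {P' : ℕ} {d : ℕ → ZMod 2}

lemma block_win (hB : BSys u i P' d) (s : ℕ) :
    FacAt u (P' + 1 + (d s).val) (i s) = blockW (u 0) P' (d s) := by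
  apply List.ext_getElem (by simp)
  intro j h1 h2
  simp only [FacAt_length] at h1
  rw [FacAt_getElem u _ (i s) j h1]
  match j with
  | 0 =>
    rw [show (blockW (u 0) P' (d s))[0] = u 0 from rfl]
    exact hB.head s
  | (j' + 1) =>
    have : (blockW (u 0) P' (d s))[j' + 1]'h2 = u 0 + 1 := by
      simp [blockW]
    rw [this]
    exact hB.interior s (j' + 1) (by omega) h1

lemma concat_win (hB : BSys u i P' d) : ∀ L t,
    i (t + L) = i t + (concatW (u 0) P' (FacAt d L t)).length ∧
    FacAt u ((concatW (u 0) P' (FacAt d L t)).length) (i t) = concatW (u 0) P' (FacAt d L t) := by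
  intro L
  induction L with
  | zero =>
    intro t
    constructor
    · simp [FacAt, concatW]
    · simp [FacAt, concatW]
  | succ L ih =>
    intro t
    obtain ⟨ih1, ih2⟩ := ih t
    have hsplit : FacAt d (L + 1) t = FacAt d L t ++ [d (t + L)] := FacAt_succ d L t
    have hc : concatW (u 0) P' (FacAt d (L+1) t) =
        concatW (u 0) P' (FacAt d L t) ++ blockW (u 0) P' (d (t + L)) := by
      rw [hsplit, concatW_append, concatW_cons, concatW_nil, List.append_nil]
    have hlen : (concatW (u 0) P' (FacAt d (L+1) t)).length =
        (concatW (u 0) P' (FacAt d L t)).length + (P' + 1 + (d (t+L)).val) := by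
      rw [hc]; simp
    constructor
    · have hg := hB.gap (t + L)
      have e : t + (L + 1) = (t + L) + 1 := by omega
      rw [e, hg, hlen, ih1]
      omega
    · rw [hlen, hc, FacAt_add, ih2, ← ih1, hB.block_win (t + L)]

lemma concat_win_end (hB : BSys u i P' d) (L t : ℕ) :
    u (i t + (concatW (u 0) P' (FacAt d L t)).length) = u 0 := by
  rw [← (hB.concat_win L t).1]
  exact hB.head _

lemma loc (hB : BSys u i P' d) : ∀ m, ∃ s, i s ≤ m ∧ m < i (s + 1) := by
  intro m
  induction m with
  | zero =>
    have h0 := hB.izero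
    have h1 : i 0 < i (0 + 1) := hB.mono (by omega)
    exact ⟨0, by omega, by omega⟩
  | succ m ih =>
    obtain ⟨s, h1, h2⟩ := ih
    rcases Nat.lt_or_ge (m + 1) (i (s + 1)) with h | h
    · exact ⟨s, by omega, h⟩
    · have he : m + 1 = i (s + 1) := by omega
      exact ⟨s + 1, by omega, by rw [he]; exact hB.mono (by omega)⟩

/-- blockW 0 with one more `b` is blockW 1 -/
lemma blockW_zero_snoc (a : ZMod 2) (P' : ℕ) :
    blockW a P' 0 ++ [a + 1] = blockW a P' 1 := by
  rw [blockW, blockW]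
  rw [show ((0:ZMod 2)).val = 0 from rfl, show ((1:ZMod 2)).val = 1 from rfl]
  rw [List.cons_append, ← List.replicate_succ']

/-- a right-special factor of `d` yields a right-special factor of `u`. -/
lemma dfac_to_uRS (hB : BSys u i P' d) (v : Word)
    (h0 : IsFactor d (v ++ [0])) (h1 : IsFactor d (v ++ [1])) :
    concatW (u 0) P' (v ++ [0]) ∈ RSet u ((concatW (u 0) P' (v ++ [0])).length) := by
  set k := v.length with hk
  have hl : (v ++ [0] : Word).length = k + 1 := by simp [hk]
  have hl' : (v ++ [1] : Word).length = k + 1 := by simp [hk]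
  obtain ⟨t0, ht0⟩ := (isFactor_iff_len hl).1 h0
  obtain ⟨t1, ht1⟩ := (isFactor_iff_len hl').1 h1
  apply mem_rset_of_two_ext rfl (c := u 0) (c' := u 0 + 1) _ _ (zmod2_self_ne_add_one (u 0))
  · -- extension by a
    obtain ⟨hw1, hw2⟩ := hB.concat_win (k + 1) t0
    rw [← ht0] at hw1 hw2
    have : concatW (u 0) P' (v ++ [0]) ++ [u 0] =
        FacAt u ((concatW (u 0) P' (v ++ [0])).length + 1) (i t0) := by
      rw [FacAt_succ, hw2]
      congr 1
      rw [show u (i t0 + (concatW (u 0) P' (v ++ [0])).length) = u 0 from by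
        rw [ht0]; exact hB.concat_win_end (k+1) t0]
    rw [this]
    exact isFactor_facAt _ _ _
  · -- extension by b : equals the concatenation over v ++ [1]
    have key : concatW (u 0) P' (v ++ [0]) ++ [u 0 + 1] = concatW (u 0) P' (v ++ [1]) := by
      rw [concatW_append, concatW_append, concatW_cons, concatW_cons, concatW_nil,
        List.append_nil, List.append_nil, List.append_assoc, blockW_zero_snoc]
    rw [key]
    obtain ⟨hw1, hw2⟩ := hB.concat_win (k + 1) t1
    rw [← ht1] at hw2
    rw [← hw2]
    exact isFactor_facAt _ _ _

/-- at most one right special factor of `d` in each length. -/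
lemma d_rs_unique (hB : BSys u i P' d) (hu : IsSturmian u) (k : ℕ) :
    ∀ v1 ∈ RSet d k, ∀ v2 ∈ RSet d k, v1 = v2 := by
  intro v1 hv1 v2 hv2
  by_contra hne
  obtain ⟨hl1, h10, h11⟩ := hv1
  obtain ⟨hl2, h20, h21⟩ := hv2
  set W1 := concatW (u 0) P' (v1 ++ [0]) with hW1
  set W2 := concatW (u 0) P' (v2 ++ [0]) with hW2
  have hR1 := hB.dfac_to_uRS v1 h10 h11
  have hR2 := hB.dfac_to_uRS v2 h20 h21
  have hcount1 : W1.count (u 0) = k + 1 := by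
    rw [hW1, count_concatW_self]; simp [hl1]
  have hcount2 : W2.count (u 0) = k + 1 := by
    rw [hW2, count_concatW_self]; simp [hl2]
  -- key sub-lemma : a shorter RS cannot be a strict suffix
  have key : ∀ va vb : Word, va.length = k → vb.length = k →
      (concatW (u 0) P' (va ++ [0])) ∈ RSet u (concatW (u 0) P' (va ++ [0])).length →
      (concatW (u 0) P' (vb ++ [0])) ∈ RSet u (concatW (u 0) P' (vb ++ [0])).length →
      (concatW (u 0) P' (va ++ [0])).length < (concatW (u 0) P' (vb ++ [0])).length → False := by
    intro va vb hla hlb hRa hRb hlt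
    set Wa := concatW (u 0) P' (va ++ [0]) with hWa
    set Wb := concatW (u 0) P' (vb ++ [0]) with hWb
    have hsuffix := rset_suffix hu hRa hRb (le_of_lt hlt)
    set Δ := Wb.length - Wa.length with hΔ
    have hΔpos : 1 ≤ Δ := by omega
    have hca : Wa.count (u 0) = k + 1 := by
      rw [hWa, count_concatW_self]; simp [hla]
    have hcb : Wb.count (u 0) = k + 1 := by
      rw [hWb, count_concatW_self]; simp [hlb]
    have hsplit : Wb = Wb.take Δ ++ Wb.drop Δ := (List.take_append_drop Δ Wb).symm
    have hcountsplit : Wb.count (u 0) = (Wb.take Δ).count (u 0) + (Wb.drop Δ).count (u 0) := by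
      conv_lhs => rw [hsplit]
      rw [List.count_append]
    rw [← hsuffix, hca, hcb] at hcountsplit
    -- the prefix contains at least one occurrence of `a`
    have hmem : u 0 ∈ Wb.take Δ := by
      have h0 : (Wb.take Δ)[0]? = some (u 0) := by
        rw [List.getElem?_take, if_pos (by omega : 0 < Δ)]
        rcases List.exists_cons_of_ne_nil (l := (vb ++ [0] : Word)) (by simp) with ⟨c, rest, hcr⟩
        rw [hWb, hcr]
        exact concatW_head? (u 0) P' c rest
      obtain ⟨hlt0, hget⟩ := List.getElem?_eq_some_iff.1 h0
      rw [← hget]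
      exact List.getElem_mem _
    have := List.count_pos_iff.2 hmem
    omega
  rcases Nat.lt_trichotomy W1.length W2.length with h | h | h
  · exact key v1 v2 hl1 hl2 hR1 hR2 h
  · -- equal lengths : equal as RS, contradiction with injectivity
    have : W1 = W2 := by
      rw [← h] at hR2
      exact rset_unique hu W1.length _ hR1 _ hR2
    have := concatW_inj (u 0) P' _ _ this
    exact hne (by
      have := congrArg (fun l : Word => l.take k) this
      simpa [hl1, hl2] using this)
  · exact key v2 v1 hl2 hl1 hR2 hR1 h

/-- the derived sequence is not eventually periodic. -/
lemma d_not_evPer (hB : BSys u i P' d) (hu : IsSturmian u) : ¬ EvPer d := by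
  rintro ⟨p, hp, M, hper⟩
  apply sturmian_not_evPer hu
  set Q := i (M + p) - i M with hQ
  have hQpos : 1 ≤ Q := by
    have : i M < i (M + p) := hB.mono (by omega)
    omega
  have hshift : ∀ j, i (M + j + p) = i (M + j) + Q := by
    intro j
    induction j with
    | zero =>
      have : i M ≤ i (M + p) := le_of_lt (hB.mono (by omega))
      simp [hQ]
      omega
    | succ j ih =>
      have e1 : M + (j+1) + p = (M + j + p) + 1 := by omega
      have e2 : M + (j+1) = (M + j) + 1 := by omega
      rw [e1, e2, hB.gap (M + j + p), hB.gap (M + j), ih]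
      have : d (M + j + p) = d (M + j) := hper (M + j) (by omega)
      rw [this]
      omega
  refine ⟨Q, hQpos, i M, fun m hm => ?_⟩
  obtain ⟨s, hs1, hs2⟩ := hB.loc m
  have hsM : M ≤ s := by
    by_contra hc
    push_neg at hc
    have : i (s + 1) ≤ i M := by
      rcases Nat.eq_or_lt_of_le (by omega : s + 1 ≤ M) with h | h
      · rw [h]
      · exact le_of_lt (hB.mono h)
    omega
  obtain ⟨j, rfl⟩ : ∃ j, s = M + j := ⟨s - M, by omega⟩
  have his : i (M + j + p) = i (M + j) + Q := hshift j
  have his1 : i (M + j + p + 1) = i (M + j + 1) + Q := by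
    have := hshift (j + 1)
    have e : M + (j + 1) = M + j + 1 := by omega
    have e2 : M + (j + 1) + p = M + j + p + 1 := by omega
    rw [e2, e] at this
    exact this
  rcases Nat.eq_or_lt_of_le hs1 with h | h
  · -- m is a block start
    rw [← h, ← his]
    exact (hB.head _).trans (hB.head _).symm
  · -- m is interior
    have h1 : u m = u 0 + 1 := hB.mid _ _ h hs2
    have h2 : u (m + Q) = u 0 + 1 := by
      apply hB.mid (M + j + p) <;> omega
    rw [h1, h2]

lemma rset_ncard_le_one {z : ℕ → ZMod 2} {k : ℕ}
    (h : ∀ v1 ∈ RSet z k, ∀ v2 ∈ RSet z k, v1 = v2) : (RSet z k).ncard ≤ 1 := by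
  rcases Set.eq_empty_or_nonempty (RSet z k) with he | ⟨A, hA⟩
  · rw [he]; simp
  · have : RSet z k = {A} := by
      apply Set.Subset.antisymm
      · intro x hx
        exact h x hx A hA
      · rintro x rfl
        exact hA
    rw [this, Set.ncard_singleton]

lemma d_sturmian (hB : BSys u i P' d) (hu : IsSturmian u) : IsSturmian d := by
  have upper : ∀ k, Cplx d k ≤ k + 1 := by
    intro k
    induction k with
    | zero => rw [cplx_zero]
    | succ k ih =>
      have := cplx_succ d k
      have := rset_ncard_le_one (hB.d_rs_unique hu k)
      omega
  have lower := cplx_ge_of_not_evPer (hB.d_not_evPer hu)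
  intro k
  have := upper k
  have := lower k
  omega

end BSys


/-! ### Occurrences of prefixes vs the derived sequence -/

lemma zmod2_val_cases (x : ZMod 2) : (x = 0 ∧ x.val = 0) ∨ (x = 1 ∧ x.val = 1) := by
  revert x; decide

lemma zmod2_val_inj {x y : ZMod 2} (h : x.val = y.val) : x = y := by
  rcases zmod2_val_cases x with ⟨h1, h2⟩ | ⟨h1, h2⟩ <;>
    rcases zmod2_val_cases y with ⟨h3, h4⟩ | ⟨h3, h4⟩
  · rw [h1, h3]
  · exfalso; omega
  · exfalso; omega
  · rw [h1, h3]

namespace BSys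

variable {u : ℕ → ZMod 2} {i : ℕ → ℕ} {P' : ℕ} {d : ℕ → ZMod 2}

lemma self_le (hB : BSys u i P' d) : ∀ t, t ≤ i t := by
  intro t
  induction t with
  | zero => omega
  | succ t ih =>
    have := hB.mono (show t < t + 1 by omega)
    omega

lemma gap_eq_d_eq (hB : BSys u i P' d) {s s' : ℕ}
    (h : i (s + 1) - i s = i (s' + 1) - i s') : d s = d s' := by
  have g1 := hB.gap s
  have g2 := hB.gap s'
  exact zmod2_val_inj (by omega)

lemma occ_equiv (hB : BSys u i P' d) (N : ℕ) (hN : 1 ≤ N) (K : ℕ)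
    (hK1 : N ≤ i K) (hK2 : ∀ s, s < K → i s < N) (k'' : ℕ)
    (hk : k'' = if N - 1 - i (K - 1) ≤ P' then K - 1 else K) (m : ℕ) :
    (∀ j, j < N → u (m + j) = u j) ↔ ∃ t, m = i t ∧ (∀ s, s < k'' → d (t + s) = d s) := by
  have hK0 : 1 ≤ K := by
    by_contra hc
    push_neg at hc
    interval_cases K
    rw [hB.izero] at hK1
    omega
  set c := N - 1 - i (K - 1) with hc
  have hiK : i K = i (K - 1) + (P' + 1 + (d (K - 1)).val) := by
    have := hB.gap (K - 1)
    have e : K - 1 + 1 = K := by omega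
    rw [e] at this
    exact this
  have hiK1N : i (K - 1) < N := hK2 _ (by omega)
  have hcb : c ≤ P' + (d (K - 1)).val := by omega
  have hkK : k'' = K - 1 ∨ (k'' = K ∧ c = P' + 1 ∧ d (K - 1) = 1) := by
    by_cases h : c ≤ P'
    · left; rw [hk, if_pos h]
    · right
      refine ⟨by rw [hk, if_neg h], ?_, ?_⟩
      · rcases zmod2_val_cases (d (K - 1)) with ⟨_, h2⟩ | ⟨_, h2⟩ <;> omega
      · rcases zmod2_val_cases (d (K - 1)) with ⟨h1, h2⟩ | ⟨h1, _⟩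
        · omega
        · exact h1
  have hk''K : k'' ≤ K := by rcases hkK with h | ⟨h, _⟩ <;> omega
  constructor
  · -- occurrence implies block pattern
    intro h
    have hm : u m = u 0 := by
      have := h 0 (by omega)
      simpa using this
    obtain ⟨t, rfl⟩ := hB.complete m hm
    refine ⟨t, rfl, ?_⟩
    -- block starts coincide
    have claimA : ∀ s, s ≤ K - 1 → i (t + s) = i t + i s := by
      intro s hs
      induction s with
      | zero => simp [hB.izero]
      | succ s ih =>
        have ih' := ih (by omega)
        have hs1N : i (s + 1) < N := hK2 (s + 1) (by omega)
        have hnext : u (i t + i (s + 1)) = u 0 := by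
          rw [h (i (s + 1)) hs1N]
          exact hB.head (s + 1)
        obtain ⟨τ, hτ⟩ := hB.complete _ hnext
        have hτgt : t + s < τ := by
          have : i (t + s) < i τ := by
            rw [← hτ, ih']
            have : i s < i (s + 1) := hB.mono (by omega)
            omega
          exact (hB.mono.lt_iff_lt).1 this
        rcases Nat.eq_or_lt_of_le (by omega : t + s + 1 ≤ τ) with he | hlt
        · rw [← he] at hτ
          rw [show t + (s + 1) = t + s + 1 from by omega]
          omega
        · exfalso
          -- there would be an `a`-position strictly inside a block of w
          have h1 : i (t + s) < i (t + s + 1) := hB.mono (by omega)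
          have h2 : i (t + s + 1) < i τ := hB.mono hlt
          rw [← hτ] at h2
          set j := i (t + s + 1) - i t with hj
          have hjrange : i s < j ∧ j < i (s + 1) := by
            constructor <;> omega
          have hjN : j < N := by omega
          have : u (i t + j) = u j := h j hjN
          have hja : u (i t + j) = u 0 := by
            have : i t + j = i (t + s + 1) := by omega
            rw [this]
            exact hB.head _
          have hjb : u j = u 0 + 1 := hB.mid s j hjrange.1 hjrange.2
          rw [hja, hjb] at this
          exact zmod2_self_ne_add_one (u 0) this
    intro s hs
    rcases Nat.lt_or_ge s (K - 1) with hsK | hsK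
    · -- gaps coincide
      apply hB.gap_eq_d_eq
      have e1 := claimA s (by omega)
      have e2 := claimA (s + 1) (by omega)
      have e3 : t + s + 1 = t + (s + 1) := by omega
      rw [e3, e2, e1]
      omega
    · -- the boundary block, in the case k'' = K
      rcases hkK with h' | ⟨h', hcP, hd1⟩
      · omega
      · have hsK' : s = K - 1 := by omega
        subst hsK'
        rw [hd1]
        -- show the gap of block t + K - 1 is long
        by_contra hne
        have hval : (d (t + (K - 1))).val = 0 := by
          rcases zmod2_val_cases (d (t + (K - 1))) with ⟨_, h2⟩ | ⟨h1, _⟩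
          · exact h2
          · exact absurd h1 hne
        have hgK : i (t + (K - 1) + 1) = i (t + (K - 1)) + (P' + 1) := by
          rw [hB.gap, hval]
        have eA := claimA (K - 1) (by omega)
        -- the position m + N - 1 would be an `a` position but is interior in w
        have hpos : i (t + (K - 1) + 1) = i t + (N - 1) := by
          rw [hgK, eA]
          omega
        have h1 : u (i t + (N - 1)) = u 0 := by
          rw [← hpos]; exact hB.head _
        have hv1 : (d (K - 1)).val = 1 := by rw [hd1]; rfl
        have h2 : u (N - 1) = u 0 + 1 := by
          apply hB.mid (K - 1)
          · omega
          · rw [hB.gap]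
            omega
        have := h (N - 1) (by omega)
        rw [h1, h2] at this
        exact zmod2_self_ne_add_one (u 0) this
  · -- block pattern implies occurrence
    rintro ⟨t, rfl, hpat⟩
    have claimA : ∀ s, s ≤ K - 1 → i (t + s) = i t + i s := by
      intro s hs
      induction s with
      | zero => simp [hB.izero]
      | succ s ih =>
        have ih' := ih (by omega)
        have e3 : t + s + 1 = t + (s + 1) := by omega
        have hd : d (t + s) = d s := by
          apply hpat
          rcases hkK with h' | ⟨h', _⟩ <;> omega
        have g1 := hB.gap (t + s)
        have g2 := hB.gap s
        rw [hd] at g1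
        rw [e3] at g1
        omega
    have hend : i t + N ≤ i (t + K) := by
      have eA := claimA (K - 1) (by omega)
      have g := hB.gap (t + (K - 1))
      have e : t + (K - 1) + 1 = t + K := by omega
      rw [e] at g
      rcases hkK with h' | ⟨h', hcP, hd1⟩
      · -- short case : c ≤ P'
        have : c ≤ P' := by
          by_contra hcc
          rw [hk, if_neg hcc] at h'
          omega
        omega
      · have hd : d (t + (K - 1)) = d (K - 1) := by
          apply hpat
          omega
        rw [hd, hd1] at g
        rw [show ((1 : ZMod 2)).val = 1 from rfl] at g
        omega
    intro j hj
    rcases zmod2_eq_or (u j) (u 0) with hja | hjb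
    · -- a positions match
      obtain ⟨s, hs⟩ := hB.complete j hja
      have hsK : s < K := by
        have : i s < i K := by omega
        exact (hB.mono.lt_iff_lt).1 this
      have := claimA s (by omega)
      rw [hja, hs, ← this]
      exact hB.head _
    · -- interior positions match
      obtain ⟨s, hs1, hs2⟩ := hB.loc j
      have hsK : s < K := by
        have : i s < i K := by omega
        exact (hB.mono.lt_iff_lt).1 this
      have hs1' : i s < j := by
        rcases Nat.eq_or_lt_of_le hs1 with he | he
        · exfalso
          rw [← he] at hjb
          rw [hB.head s] at hjb
          exact zmod2_self_ne_add_one (u 0) hjb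
        · exact he
      have eA := claimA s (by omega)
      have hint : i (t + s) < i t + j ∧ i t + j < i (t + s + 1) := by
        constructor
        · omega
        · rcases Nat.lt_or_ge (s + 1) K with hsK' | hsK'
          · have := claimA (s + 1) (by omega)
            have e3 : t + s + 1 = t + (s + 1) := by omega
            rw [e3, this]
            omega
          · have hsK'' : s + 1 = K := by omega
            have e3 : t + s + 1 = t + K := by omega
            rw [e3]
            omega
      rw [hjb, hB.mid (t + s) (i t + j) hint.1 hint.2]

end BSys


/-! ### Count transfer -/

lemma count_one_blockW (a : ZMod 2) (P' : ℕ) (c : ZMod 2) :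
    (blockW a P' c).count 1 = if a = 1 then 1 else P' + c.val := by
  rcases zmod2_cases a with rfl | rfl
  · rw [if_neg (by decide), blockW]
    rw [show (0 : ZMod 2) + 1 = 1 from rfl]
    rw [List.count_cons, List.count_replicate]
    simp
  · rw [if_pos rfl, blockW]
    rw [show (1 : ZMod 2) + 1 = 0 from rfl]
    rw [List.count_cons, List.count_replicate]
    simp

lemma count_one_concatW (a : ZMod 2) (P' : ℕ) (ρ : Word) :
    (concatW a P' ρ).count 1 = if a = 1 then ρ.length else P' * ρ.length + sumVal ρ := by
  induction ρ with
  | nil => simp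
  | cons c ρ ih =>
    rw [concatW_cons, List.count_append, ih, count_one_blockW, sumVal_cons]
    rcases zmod2_cases a with rfl | rfl
    · rw [if_neg (by decide), if_neg (by decide), if_neg (by decide)]
      simp only [List.length_cons]
      ring
    · rw [if_pos rfl, if_pos rfl, if_pos rfl]
      simp only [List.length_cons]
      omega

/-! ### Occurrences of prefixes -/

lemma occAt_prefix_iff (z : ℕ → ZMod 2) (N m : ℕ) :
    OccAt z (FacAt z N 0) m ↔ ∀ j, j < N → z (m + j) = z j := by
  rw [occAt_iff_facAt (FacAt_length z N 0)]
  constructor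
  · intro h j hj
    have := FacAt_ext_iff.1 h.symm j hj
    simpa using this
  · intro h
    refine (FacAt_ext_iff.2 fun j hj => ?_).symm
    simpa using h j hj

/-! ### The main induction -/

lemma tprime : ∀ N : ℕ, ∀ u : ℕ → ZMod 2, IsSturmian u → ∀ R S : Word,
    R ∈ ReturnWords u (FacAt u N 0) → S ∈ ReturnWords u (FacAt u N 0) → R ≠ S →
    ((R.length : ZMod 2) * (S.count 1 : ZMod 2) + (R.count 1 : ZMod 2) * (S.length : ZMod 2)) = 1 := by
  intro N
  induction N using Nat.strong_induction_on with
  | _ N IH =>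
    intro u hu R S hR hS hne
    rcases Nat.eq_zero_or_pos N with rfl | hN
    · -- base case : the empty prefix
      have hocc : ∀ m, OccAt u (FacAt u 0 0) m := by
        intro m
        rw [occAt_prefix_iff]
        intro j hj
        exact absurd hj (by omega)
      have hsingle : ∀ T : Word, T ∈ ReturnWords u (FacAt u 0 0) → ∃ m, T = [u m] := by
        rintro T ⟨m1, m2, _, _, hlt, hbet, hT⟩
        have hm2 : m2 = m1 + 1 := by
          by_contra hc
          exact hbet (m1 + 1) (by omega) (by omega) (hocc (m1 + 1))
        refine ⟨m1, ?_⟩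
        rw [hT, hm2]
        rw [show m1 + 1 - m1 = 1 from by omega]
        have : FacAt u 1 m1 = [u m1] := by
          apply List.ext_getElem (by simp)
          intro j h1 h2
          simp only [FacAt_length] at h1
          interval_cases j
          rw [FacAt_getElem u 1 m1 0 (by omega)]
          simp
        exact this
      obtain ⟨m1, hm1⟩ := hsingle R hR
      obtain ⟨m2, hm2⟩ := hsingle S hS
      rw [hm1, hm2] at hne ⊢
      have hud : u m1 ≠ u m2 := fun h => hne (by rw [h])
      rcases zmod2_cases (u m1) with h1 | h1 <;> rcases zmod2_cases (u m2) with h2 | h2 <;>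
        rw [h1, h2] at hud ⊢ <;> first
        | (exact absurd rfl hud)
        | (simp [List.count_cons])
    · -- inductive step
      obtain ⟨i, P', d, hB, -, -⟩ := blockSys_exists hu
      have hd : IsSturmian d := hB.d_sturmian hu
      have hKex : ∃ t, N ≤ i t := ⟨N, hB.self_le N⟩
      set K := Nat.find hKex with hKdef
      have hK1 : N ≤ i K := Nat.find_spec hKex
      have hK2 : ∀ s, s < K → i s < N := by
        intro s hs
        have := Nat.find_min hKex hs
        omega
      have hK0 : 1 ≤ K := by
        by_contra hc
        push_neg at hc
        have hKeq : K = 0 := by omega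
        rw [hKeq, hB.izero] at hK1
        omega
      set k'' : ℕ := if N - 1 - i (K - 1) ≤ P' then K - 1 else K with hk
      have hiK1 : K - 1 ≤ i (K - 1) := hB.self_le _
      have hiK1N : i (K - 1) < N := hK2 _ (by omega)
      have hkN : k'' < N := by
        rw [hk]
        by_cases h : N - 1 - i (K - 1) ≤ P'
        · rw [if_pos h]; omega
        · rw [if_neg h]
          push_neg at h
          omega
      -- correspondence for return words
      have corr : ∀ T : Word, T ∈ ReturnWords u (FacAt u N 0) →
          ∃ ρ ∈ ReturnWords d (FacAt d k'' 0), T = concatW (u 0) P' ρ := by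
        rintro T ⟨m1, m2, ho1, ho2, hlt, hbet, hT⟩
        rw [occAt_prefix_iff] at ho1 ho2
        have hequiv := fun m => hB.occ_equiv N hN K hK1 hK2 k'' hk m
        obtain ⟨t1, rfl, hp1⟩ := (hequiv m1).1 ho1
        obtain ⟨t2, rfl, hp2⟩ := (hequiv m2).1 ho2
        have ht12 : t1 < t2 := (hB.mono.lt_iff_lt).1 hlt
        have hdocc : ∀ t, (∀ s, s < k'' → d (t + s) = d s) ↔ OccAt d (FacAt d k'' 0) t := by
          intro t
          rw [occAt_prefix_iff]
        refine ⟨FacAt d (t2 - t1) t1, ⟨t1, t2, (hdocc t1).1 hp1, (hdocc t2).1 hp2, ht12, ?_, rfl⟩, ?_⟩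
        · intro τ hτ1 hτ2 hocc
          have hpat := (hdocc τ).2 hocc
          have := (hequiv (i τ)).2 ⟨τ, rfl, hpat⟩
          rw [← occAt_prefix_iff] at this
          exact hbet (i τ) (hB.mono hτ1) (hB.mono hτ2) this
        · obtain ⟨e1, e2⟩ := hB.concat_win (t2 - t1) t1
          have e3 : t1 + (t2 - t1) = t2 := by omega
          rw [e3] at e1
          have e4 : i t2 - i t1 = (concatW (u 0) P' (FacAt d (t2 - t1) t1)).length := by omega
          rw [hT]
          rw [show (List.ofFn fun τ : Fin (i t2 - i t1) => u (i t1 + ↑τ)) =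
            FacAt u (i t2 - i t1) (i t1) from rfl]
          rw [e4]
          exact e2
      obtain ⟨ρR, hρR, hRc⟩ := corr R hR
      obtain ⟨ρS, hρS, hSc⟩ := corr S hS
      have hρne : ρR ≠ ρS := by
        intro h
        apply hne
        rw [hRc, hSc, h]
      have hDd := IH k'' hkN d hd ρR ρS hρR hρS hρne
      -- transfer the determinant computation
      have h2 : (2 : ZMod 2) = 0 := rfl
      have hlenR : R.length = (P' + 1) * ρR.length + ρR.count 1 := by
        rw [hRc, concatW_length, sumVal_eq_count]
      have hlenS : S.length = (P' + 1) * ρS.length + ρS.count 1 := by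
        rw [hSc, concatW_length, sumVal_eq_count]
      rcases zmod2_cases (u 0) with h0 | h0
      · have hcntR : R.count 1 = P' * ρR.length + ρR.count 1 := by
          rw [hRc, h0, count_one_concatW, if_neg (by decide), sumVal_eq_count]
        have hcntS : S.count 1 = P' * ρS.length + ρS.count 1 := by
          rw [hSc, h0, count_one_concatW, if_neg (by decide), sumVal_eq_count]
        rw [hlenR, hlenS, hcntR, hcntS]
        push_cast
        linear_combination hDd +
          ((P' : ZMod 2) * ((P' : ZMod 2) + 1) * (ρR.length : ZMod 2) * (ρS.length : ZMod 2)
            + (P' : ZMod 2) * (ρR.length : ZMod 2) * (ρS.count 1 : ZMod 2)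
            + (P' : ZMod 2) * (ρR.count 1 : ZMod 2) * (ρS.length : ZMod 2)
            + (ρR.count 1 : ZMod 2) * (ρS.count 1 : ZMod 2)) * h2
      · have hcntR : R.count 1 = ρR.length := by
          rw [hRc, h0, count_one_concatW, if_pos rfl]
        have hcntS : S.count 1 = ρS.length := by
          rw [hSc, h0, count_one_concatW, if_pos rfl]
        rw [hlenR, hlenS, hcntR, hcntS]
        push_cast
        linear_combination hDd +
          (((P' : ZMod 2) + 1) * (ρR.length : ZMod 2) * (ρS.length : ZMod 2)) * h2


/-- no prefix of a Sturmian sequence has two distinct return words that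
both contain an even number of `1`'s. -/
theorem sturmian_no_two_stable_return_words (u : ℕ → ZMod 2) (hu : IsSturmian u) :
    ∀ n : ℕ, ¬ ∃ r s : Word,
      r ∈ ReturnWords u (List.ofFn fun i : Fin n => u i) ∧
      s ∈ ReturnWords u (List.ofFn fun i : Fin n => u i) ∧
      r ≠ s ∧ Even (r.count 1) ∧ Even (s.count 1) := by
  intro n
  rintro ⟨r, s, hr, hs, hne, her, hes⟩
  have hpre : (List.ofFn fun i : Fin n => u i) = FacAt u n 0 := by
    unfold FacAt
    congr 1
    funext j
    rw [Nat.zero_add]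
  rw [hpre] at hr hs
  have hD := tprime n u hu r s hr hs hne
  have h2 : (2 : ZMod 2) = 0 := rfl
  have hr0 : ((r.count 1 : ℕ) : ZMod 2) = 0 := by
    obtain ⟨k, hk⟩ := her
    rw [hk]
    push_cast
    linear_combination (k : ZMod 2) * h2
  have hs0 : ((s.count 1 : ℕ) : ZMod 2) = 0 := by
    obtain ⟨k, hk⟩ := hes
    rw [hk]
    push_cast
    linear_combination (k : ZMod 2) * h2
  rw [hr0, hs0] at hD
  simp at hD
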